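/- Let G(x) be a q×q symmetric matrix with entries in ℝ[x_1,...,x_n], K = {x ∈ ℝ^n : G(x) ⪰ 0}, G̃(x) = diag(G(x), I_q − G(x)) the 2q×2q block-diagonal dilation, and let H(G) ⊆ ℝ[x_1,...,x_n] be the set of all polynomials of the form λ_0 + Σ_{k=1}^m ⟨Λ_k, G̃(x)^{⊗k}⟩ where m ∈ ℕ, λ_0 ≥ 0 is real, and each Λ_k is a (2q)^k × (2q)^k positive semidefinite real matrix. Suppose (i) K is compact and I_q − G(x) ⪰ 0 for all x ∈ K, and (ii) ℝ[x_1,...,x_n] = H(G) − H(G). Then the constant polynomial 1 lies in the algebraic interior of the convex set H(G): for every f ∈ ℝ[x_1,...,x_n] there exists ε_f > 0 such that 1 + λf ∈ H(G) for all real λ with |λ| < ε_f. -/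

import Mathlib

open scoped BigOperators
open scoped Matrix

noncomputable section

/-- The `k`-fold Kronecker power of a matrix, with rows and columns indexed by
functions `Fin k → ι` (a type of cardinality `(#ι)^k`):
`(M^{⊗k})_{a,b} = ∏ᵢ M_{a i, b i}`. -/
def kronPow {ι : Type*} {R : Type*} [CommMonoid R] (M : Matrix ι ι R) (k : ℕ) :
    Matrix (Fin k → ι) (Fin k → ι) R :=
  Matrix.of fun a b => ∏ i, M (a i) (b i)

/-- Trace inner product `⟨Λ, B⟩ = tr(Λᵀ B) = ∑ᵢⱼ Λᵢⱼ Bᵢⱼ` of a real matrix against a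
polynomial matrix. -/
def tipP {n : ℕ} {ι : Type*} [Fintype ι] (Λ : Matrix ι ι ℝ)
    (B : Matrix ι ι (MvPolynomial (Fin n) ℝ)) : MvPolynomial (Fin n) ℝ :=
  ∑ i, ∑ j, MvPolynomial.C (Λ i j) * B i j

/-- The cone `H(G)` of all polynomials of the form
`λ₀ + ∑_{k=1}^m ⟨Λ_k, G(x)^{⊗k}⟩` with `λ₀ ≥ 0` and each `Λ_k` positive semidefinite. -/
def Hset {n : ℕ} {ι : Type*} [Fintype ι]
    (G : Matrix ι ι (MvPolynomial (Fin n) ℝ)) : Set (MvPolynomial (Fin n) ℝ) :=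
  { p | ∃ (m : ℕ) (lam0 : ℝ) (Λ : (k : ℕ) → Matrix (Fin k → ι) (Fin k → ι) ℝ),
      0 ≤ lam0 ∧ (∀ k ∈ Finset.Icc 1 m, (Λ k).PosSemidef) ∧
      p = MvPolynomial.C lam0 + ∑ k ∈ Finset.Icc 1 m, tipP (Λ k) (kronPow G k) }

/-- Entrywise evaluation of a polynomial matrix at a point `x`. -/
def evalMat {n : ℕ} {ι : Type*} (x : Fin n → ℝ)
    (B : Matrix ι ι (MvPolynomial (Fin n) ℝ)) : Matrix ι ι ℝ :=
  Matrix.of fun i j => MvPolynomial.eval x (B i j)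

/-- The dilated matrix `G̃(x) = diag(G(x), I_q − G(x))`, a `2q × 2q` block diagonal
polynomial matrix. -/
def dilate {n q : ℕ} (G : Matrix (Fin q) (Fin q) (MvPolynomial (Fin n) ℝ)) :
    Matrix (Fin q ⊕ Fin q) (Fin q ⊕ Fin q) (MvPolynomial (Fin n) ℝ) :=
  Matrix.fromBlocks G 0 0 (1 - G)

lemma tipP_add' {n : ℕ} {ι : Type*} [Fintype ι] (Λ₁ Λ₂ : Matrix ι ι ℝ)
    (B : Matrix ι ι (MvPolynomial (Fin n) ℝ)) :
    tipP (Λ₁ + Λ₂) B = tipP Λ₁ B + tipP Λ₂ B := by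
  simp [tipP, Matrix.add_apply, add_mul, Finset.sum_add_distrib]

lemma tipP_zero' {n : ℕ} {ι : Type*} [Fintype ι]
    (B : Matrix ι ι (MvPolynomial (Fin n) ℝ)) : tipP 0 B = 0 := by
  simp [tipP]

lemma tipP_sub' {n : ℕ} {ι : Type*} [Fintype ι] (Λ₁ Λ₂ : Matrix ι ι ℝ)
    (B : Matrix ι ι (MvPolynomial (Fin n) ℝ)) :
    tipP (Λ₁ - Λ₂) B = tipP Λ₁ B - tipP Λ₂ B := by
  simp [tipP, Matrix.sub_apply, sub_mul, Finset.sum_sub_distrib]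

lemma tipP_smul' {n : ℕ} {ι : Type*} [Fintype ι] (c : ℝ) (Λ : Matrix ι ι ℝ)
    (B : Matrix ι ι (MvPolynomial (Fin n) ℝ)) :
    tipP (c • Λ) B = MvPolynomial.C c * tipP Λ B := by
  simp [tipP, Matrix.smul_apply, Finset.mul_sum, smul_eq_mul, map_mul, mul_assoc]

lemma tipP_one' {n : ℕ} {ι : Type*} [Fintype ι] [DecidableEq ι]
    (B : Matrix ι ι (MvPolynomial (Fin n) ℝ)) :
    tipP 1 B = ∑ i, B i i := by
  simp [tipP, Matrix.one_apply, apply_ite, Finset.sum_ite_eq]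

lemma trace_kronPow' {n : ℕ} {ι : Type*} [Fintype ι] [DecidableEq ι]
    (M : Matrix ι ι (MvPolynomial (Fin n) ℝ)) (k : ℕ) :
    ∑ a : Fin k → ι, kronPow M k a a = (∑ i, M i i) ^ k := by
  rw [Finset.sum_pow', Fintype.piFinset_univ]; rfl

lemma psd_add' {ι : Type*} [Fintype ι] {A B : Matrix ι ι ℝ}
    (hA : A.PosSemidef) (hB : B.PosSemidef) : (A + B).PosSemidef := by
  refine Matrix.PosSemidef.of_dotProduct_mulVec_nonneg (hA.1.add hB.1) fun x => ?_
  rw [Matrix.add_mulVec, dotProduct_add]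
  exact add_nonneg (hA.dotProduct_mulVec_nonneg x) (hB.dotProduct_mulVec_nonneg x)

lemma psd_smul' {ι : Type*} [Fintype ι] {A : Matrix ι ι ℝ} {c : ℝ}
    (hc : 0 ≤ c) (hA : A.PosSemidef) : (c • A).PosSemidef := by
  refine Matrix.PosSemidef.of_dotProduct_mulVec_nonneg ?_ ?_
  · unfold Matrix.IsHermitian
    rw [Matrix.conjTranspose_smul, hA.1]; simp
  · intro x
    rw [Matrix.smul_mulVec, dotProduct_smul, smul_eq_mul]
    exact mul_nonneg hc (hA.dotProduct_mulVec_nonneg x)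

lemma psd_trace_nonneg' {ι : Type*} [Fintype ι] [DecidableEq ι] {A : Matrix ι ι ℝ}
    (hA : A.PosSemidef) : 0 ≤ A.trace := by
  rw [Matrix.trace]
  refine Finset.sum_nonneg fun i _ => ?_
  have := hA.dotProduct_mulVec_nonneg (Pi.single i 1)
  simpa [dotProduct, Matrix.mulVec, Pi.single_apply, Finset.sum_ite_eq] using this

lemma psd_trace_smul_one_sub' {ι : Type*} [Fintype ι] [DecidableEq ι] {A : Matrix ι ι ℝ}
    (hA : A.PosSemidef) : (A.trace • (1 : Matrix ι ι ℝ) - A).PosSemidef := by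
  obtain ⟨B, rfl⟩ : ∃ B : Matrix ι ι ℝ, A = Bᴴ * B := by
    open scoped MatrixOrder in
    obtain ⟨B, hB⟩ := CStarAlgebra.nonneg_iff_eq_star_mul_self.mp hA.nonneg
    exact ⟨B, hB⟩
  refine Matrix.PosSemidef.of_dotProduct_mulVec_nonneg ?_ ?_
  · unfold Matrix.IsHermitian
    rw [Matrix.conjTranspose_sub, Matrix.conjTranspose_smul, Matrix.conjTranspose_one]
    simp [Matrix.conjTranspose_mul]
  · intro x
    rw [Matrix.sub_mulVec, dotProduct_sub, Matrix.smul_mulVec,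
      Matrix.one_mulVec, dotProduct_smul, sub_nonneg, star_trivial]
    have hx : x ⬝ᵥ (Bᴴ * B) *ᵥ x = ∑ i, (∑ j, B i j * x j) ^ 2 := by
      rw [← Matrix.mulVec_mulVec, Matrix.dotProduct_mulVec]
      have : x ᵥ* Bᴴ = B *ᵥ x := by
        ext i
        simp [Matrix.vecMul, Matrix.mulVec, dotProduct, Matrix.conjTranspose_apply,
          mul_comm]
      rw [this]
      simp [dotProduct, Matrix.mulVec, sq]
    have htr : (Bᴴ * B).trace = ∑ i, ∑ j, B i j ^ 2 := by
      rw [Matrix.trace, Finset.sum_comm]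
      congr 1; ext j
      simp [Matrix.diag, Matrix.mul_apply, Matrix.conjTranspose_apply, sq]
    rw [hx, htr, smul_eq_mul, Finset.sum_mul]
    refine Finset.sum_le_sum fun i _ => ?_
    calc (∑ j, B i j * x j) ^ 2 ≤ (∑ j, B i j ^ 2) * ∑ j, x j ^ 2 :=
          Finset.sum_mul_sq_le_sq_mul_sq _ _ _
    _ = (∑ j, B i j ^ 2) * (x ⬝ᵥ x) := by simp [dotProduct, sq]

-- Hset closure lemmas
lemma Hset_const_mem {n : ℕ} {ι : Type*} [Fintype ι]
    (G : Matrix ι ι (MvPolynomial (Fin n) ℝ)) {c : ℝ} (hc : 0 ≤ c) :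
    MvPolynomial.C c ∈ Hset G :=
  ⟨0, c, fun _ => 0, hc, by simp, by simp⟩

lemma Hset_add {n : ℕ} {ι : Type*} [Fintype ι]
    {G : Matrix ι ι (MvPolynomial (Fin n) ℝ)} {p p' : MvPolynomial (Fin n) ℝ}
    (hp : p ∈ Hset G) (hp' : p' ∈ Hset G) : p + p' ∈ Hset G := by
  obtain ⟨m1, a1, Λ1, ha1, hΛ1, rfl⟩ := hp
  obtain ⟨m2, a2, Λ2, ha2, hΛ2, rfl⟩ := hp'
  refine ⟨max m1 m2, a1 + a2,
    fun k => (if k ∈ Finset.Icc 1 m1 then Λ1 k else 0) +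
      (if k ∈ Finset.Icc 1 m2 then Λ2 k else 0),
    add_nonneg ha1 ha2, ?_, ?_⟩
  · intro k _
    refine psd_add' ?_ ?_ <;> split
    · exact hΛ1 _ ‹_›
    · exact Matrix.PosSemidef.zero
    · exact hΛ2 _ ‹_›
    · exact Matrix.PosSemidef.zero
  · simp only [tipP_add']
    rw [Finset.sum_add_distrib]
    have e1 : ∑ k ∈ Finset.Icc 1 (max m1 m2),
        tipP (if k ∈ Finset.Icc 1 m1 then Λ1 k else 0) (kronPow G k) =
        ∑ k ∈ Finset.Icc 1 m1, tipP (Λ1 k) (kronPow G k) := by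
      rw [← Finset.sum_subset (Finset.Icc_subset_Icc_right (le_max_left m1 m2))
        (fun k _ hk => by rw [if_neg hk, tipP_zero'])]
      exact Finset.sum_congr rfl fun k hk => by rw [if_pos hk]
    have e2 : ∑ k ∈ Finset.Icc 1 (max m1 m2),
        tipP (if k ∈ Finset.Icc 1 m2 then Λ2 k else 0) (kronPow G k) =
        ∑ k ∈ Finset.Icc 1 m2, tipP (Λ2 k) (kronPow G k) := by
      rw [← Finset.sum_subset (Finset.Icc_subset_Icc_right (le_max_right m1 m2))
        (fun k _ hk => by rw [if_neg hk, tipP_zero'])]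
      exact Finset.sum_congr rfl fun k hk => by rw [if_pos hk]
    rw [e1, e2, map_add]
    ring

lemma Hset_smul {n : ℕ} {ι : Type*} [Fintype ι]
    {G : Matrix ι ι (MvPolynomial (Fin n) ℝ)} {p : MvPolynomial (Fin n) ℝ} {c : ℝ}
    (hc : 0 ≤ c) (hp : p ∈ Hset G) : MvPolynomial.C c * p ∈ Hset G := by
  obtain ⟨m, a, Λ, ha, hΛ, rfl⟩ := hp
  refine ⟨m, c * a, fun k => c • Λ k, mul_nonneg hc ha,
    fun k hk => psd_smul' hc (hΛ k hk), ?_⟩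
  simp only [tipP_smul']
  rw [mul_add, map_mul, Finset.mul_sum]

-- trace of the dilated matrix is the constant q
lemma trace_dilate {n q : ℕ} (G : Matrix (Fin q) (Fin q) (MvPolynomial (Fin n) ℝ)) :
    ∑ i, dilate G i i = MvPolynomial.C (q : ℝ) := by
  rw [Fintype.sum_sum_type]
  have h1 : ∀ i : Fin q, dilate G (Sum.inl i) (Sum.inl i) = G i i := fun i => rfl
  have h2 : ∀ i : Fin q, dilate G (Sum.inr i) (Sum.inr i) = 1 - G i i := by
    intro i
    show (1 - G : Matrix _ _ _) i i = _
    rw [Matrix.sub_apply, Matrix.one_apply_eq]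
  simp only [h1, h2]
  rw [Finset.sum_sub_distrib, Finset.sum_const, Finset.card_univ, Fintype.card_fin,
    nsmul_eq_mul, mul_one, ← map_natCast (MvPolynomial.C : ℝ →+* MvPolynomial (Fin n) ℝ) q]
  ring

lemma tipP_smul_one_kron {n q : ℕ} (G : Matrix (Fin q) (Fin q) (MvPolynomial (Fin n) ℝ))
    (c : ℝ) (k : ℕ) :
    tipP (c • (1 : Matrix (Fin k → (Fin q ⊕ Fin q)) (Fin k → (Fin q ⊕ Fin q)) ℝ))
      (kronPow (dilate G) k) = MvPolynomial.C (c * (q : ℝ) ^ k) := by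
  rw [tipP_smul', tipP_one', trace_kronPow', trace_dilate, ← map_pow, ← map_mul]

lemma Hset_arch {n q : ℕ} (G : Matrix (Fin q) (Fin q) (MvPolynomial (Fin n) ℝ))
    {p : MvPolynomial (Fin n) ℝ} (hp : p ∈ Hset (dilate G)) :
    ∃ N : ℝ, 0 ≤ N ∧ MvPolynomial.C N - p ∈ Hset (dilate G) := by
  obtain ⟨m, a, Λ, ha, hΛ, rfl⟩ := hp
  refine ⟨a + ∑ k ∈ Finset.Icc 1 m, (Λ k).trace * (q : ℝ) ^ k,
    add_nonneg ha (Finset.sum_nonneg fun k hk =>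
      mul_nonneg (psd_trace_nonneg' (hΛ k hk)) (by positivity)), ?_⟩
  refine ⟨m, 0, fun k => (Λ k).trace • 1 - Λ k, le_refl 0,
    fun k hk => psd_trace_smul_one_sub' (hΛ k hk), ?_⟩
  have key : ∀ k ∈ Finset.Icc 1 m,
      tipP ((Λ k).trace • 1 - Λ k) (kronPow (dilate G) k) =
      MvPolynomial.C ((Λ k).trace * (q : ℝ) ^ k) - tipP (Λ k) (kronPow (dilate G) k) := by
    intro k _
    rw [tipP_sub', tipP_smul_one_kron]
  rw [Finset.sum_congr rfl key, Finset.sum_sub_distrib, map_add, map_sum, map_zero]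
  ring


/-- Nonlinear case: if `K = {x : G(x) ⪰ 0}` is compact, `I_q − G(x) ⪰ 0` on `K`, and
`ℝ[x] = H(G) − H(G)` (where `H(G)` is built from Kronecker powers of the dilation
`G̃ = diag(G, I − G)`), then the constant polynomial `1` is an algebraic interior point
of the convex cone `H(G)`. -/
theorem one_mem_algebraic_interior_Hset_dilated {n q : ℕ}
    (G : Matrix (Fin q) (Fin q) (MvPolynomial (Fin n) ℝ)) (hG : G.IsSymm)
    (K : Set (Fin n → ℝ))
    (hK : K = {x | (evalMat x G).PosSemidef})
    (hcomp : IsCompact K)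
    (hIG : ∀ x ∈ K, ((1 : Matrix (Fin q) (Fin q) ℝ) - evalMat x G).PosSemidef)
    (hspan : ∀ p : MvPolynomial (Fin n) ℝ,
      ∃ h1 ∈ Hset (dilate G), ∃ h2 ∈ Hset (dilate G), p = h1 - h2) :
    ∀ f : MvPolynomial (Fin n) ℝ, ∃ ε : ℝ, 0 < ε ∧
      ∀ lam : ℝ, |lam| < ε →
        1 + MvPolynomial.C lam * f ∈ Hset (dilate G) := by
  intro f
  obtain ⟨h1, hh1, h2, hh2, hf⟩ := hspan f
  obtain ⟨N1, hN1, hc1⟩ := Hset_arch G hh1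
  obtain ⟨N2, hN2, hc2⟩ := Hset_arch G hh2
  refine ⟨(N1 + N2 + 1)⁻¹, by positivity, fun lam hlam => ?_⟩
  set a : ℝ := max lam 0 with ha_def
  set b : ℝ := max (-lam) 0 with hb_def
  have ha0 : 0 ≤ a := le_max_right _ _
  have hb0 : 0 ≤ b := le_max_right _ _
  have hab : a - b = lam := max_zero_sub_max_neg_zero_eq_self lam
  have haabs : a ≤ |lam| := max_le (le_abs_self lam) (abs_nonneg lam)
  have hbabs : b ≤ |lam| := max_le (neg_le_abs lam) (abs_nonneg lam)
  have hconst : 0 ≤ 1 - a * N2 - b * N1 := by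
    have hd : (0:ℝ) < N1 + N2 + 1 := by positivity
    have h' : |lam| * (N1 + N2 + 1) < 1 := by
      have h'' := mul_lt_mul_of_pos_right hlam hd
      rwa [inv_mul_cancel₀ hd.ne'] at h''
    nlinarith [mul_le_mul_of_nonneg_right haabs hN2, mul_le_mul_of_nonneg_right hbabs hN1,
      mul_nonneg (abs_nonneg lam) hN1, mul_nonneg (abs_nonneg lam) hN2]
  have hT : 1 + MvPolynomial.C lam * f =
      MvPolynomial.C (1 - a * N2 - b * N1) +
      (MvPolynomial.C a * h1 + MvPolynomial.C b * h2 +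
        (MvPolynomial.C a * (MvPolynomial.C N2 - h2) +
          MvPolynomial.C b * (MvPolynomial.C N1 - h1))) := by
    rw [hf, ← hab]
    simp only [map_sub, map_mul, map_one]
    ring
  rw [hT]
  exact Hset_add (Hset_const_mem _ hconst)
    (Hset_add (Hset_add (Hset_smul ha0 hh1) (Hset_smul hb0 hh2))
      (Hset_add (Hset_smul ha0 hc2) (Hset_smul hb0 hc1)))

end
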